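/- Let λ < 0 be real, let c be real with 0 < |c| < 1 and set s² = 1 − c². Then for every real ρ ≥ 0, every real η ∈ [−1, 1], and every z ∈ ℂ satisfying Re z > λ/c² + (c²/(4s²|λ|))·(Im z)², one has (z − λ) + ρ + 2c·η·√(z − λ)·√ρ − s²·z ≠ 0. -/
import Mathlib

noncomputable def csqrt (w : ℂ) : ℂ := w ^ ((1 : ℂ) / 2)

lemma csqrt_sq (w : ℂ) : (csqrt w)^2 = w := by
  unfold csqrt
  rcases eq_or_ne w 0 with h | h
  · simp [h, Complex.zero_cpow (by norm_num : (1:ℂ)/2 ≠ 0)]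
  · rw [pow_two, ← Complex.cpow_add _ _ h]
    norm_num

lemma csqrt_re_nonneg (w : ℂ) : 0 ≤ (csqrt w).re := by
  unfold csqrt
  rcases eq_or_ne w 0 with h | h
  · simp [h, Complex.zero_cpow (by norm_num : (1:ℂ)/2 ≠ 0)]
  · rw [Complex.cpow_def_of_ne_zero h, Complex.exp_re]
    have harg := Complex.arg_mem_Ioc w
    have h1 : (Complex.log w * (1/2)).im = w.arg / 2 := by
      simp [Complex.log_im]; ring
    rw [h1]
    have hpi := Real.pi_pos
    simp only [Set.mem_Ioc] at harg
    apply mul_nonneg (Real.exp_nonneg _)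
    apply Real.cos_nonneg_of_mem_Icc
    constructor
    · linarith [harg.1]
    · linarith [harg.2]

lemma csqrt_ofReal (x : ℝ) (hx : 0 ≤ x) : csqrt (x : ℂ) = (Real.sqrt x : ℂ) := by
  unfold csqrt
  rw [show ((1:ℂ)/2) = ((1/2 : ℝ) : ℂ) by norm_num, ← Complex.ofReal_cpow hx,
    Real.sqrt_eq_rpow]

set_option maxHeartbeats 1000000 in
theorem no_roots_in_parabolic_domain
    (lam c ρ η : ℝ) (z : ℂ)
    (hlam : lam < 0) (hc0 : 0 < |c|) (hc1 : |c| < 1)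
    (hρ : 0 ≤ ρ) (hη : η ∈ Set.Icc (-1 : ℝ) 1)
    (hz : z.re > lam / c ^ 2 + (c ^ 2 / (4 * (1 - c ^ 2) * |lam|)) * z.im ^ 2) :
    (z - (lam : ℂ)) + (ρ : ℂ)
      + 2 * (c : ℂ) * (η : ℂ) * csqrt (z - (lam : ℂ)) * csqrt ((ρ : ℝ) : ℂ)
      - (1 - (c : ℂ) ^ 2) * z ≠ 0 := by
  intro h
  -- basic positivity facts
  have hcne : c ≠ 0 := by
    intro hcc; rw [hcc] at hc0; simp at hc0
  have hc2 : (0:ℝ) < c ^ 2 := by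
    have := pow_pos hc0 2; rwa [sq_abs] at this
  have hs2 : (0:ℝ) < 1 - c ^ 2 := by nlinarith [sq_abs c]
  have hL : (0:ℝ) < -lam := by linarith
  have habs : |lam| = -lam := abs_of_neg hlam
  obtain ⟨hη1, hη2⟩ := hη
  set q : ℂ := csqrt (z - (lam : ℂ)) with hq
  set a : ℝ := q.re with ha
  set b : ℝ := q.im with hb
  set r : ℝ := Real.sqrt ρ with hr
  have hanneg : 0 ≤ a := csqrt_re_nonneg _
  have hrnneg : 0 ≤ r := Real.sqrt_nonneg ρ
  have hr2 : r ^ 2 = ρ := Real.sq_sqrt hρ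
  have hq2 : q ^ 2 = z - (lam : ℂ) := csqrt_sq _
  have hrw : csqrt ((ρ:ℝ) : ℂ) = (r : ℂ) := csqrt_ofReal ρ hρ
  rw [hrw] at h
  -- rewrite equation purely in terms of q
  have heq : (c:ℂ)^2 * q^2 + (ρ:ℂ) + 2*(c:ℂ)*(η:ℂ)*(r:ℂ)*q - (1-(c:ℂ)^2)*(lam:ℂ) = 0 := by
    linear_combination h + (c:ℂ)^2 * hq2
  -- real and imaginary parts
  have hre := congrArg Complex.re heq
  have him := congrArg Complex.im heq
  simp only [pow_two, Complex.add_re, Complex.sub_re, Complex.mul_re, Complex.mul_im,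
    Complex.add_im, Complex.sub_im, Complex.ofReal_re, Complex.ofReal_im,
    Complex.zero_re, Complex.zero_im, Complex.re_ofNat, Complex.im_ofNat,
    Complex.one_re, Complex.one_im, ← ha, ← hb] at hre him
  -- coordinates of z
  have hza := congrArg Complex.re hq2
  have hzb := congrArg Complex.im hq2
  simp only [pow_two, Complex.mul_re, Complex.mul_im, Complex.sub_re, Complex.sub_im,
    Complex.ofReal_re, Complex.ofReal_im, ← ha, ← hb] at hza hzb
  have hzre : z.re = a^2 - b^2 + lam := by linear_combination -hza
  have hzim : z.im = 2 * a * b := by linear_combination -hzb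
  -- real-part and imaginary-part equations
  have E1 : c^2*(a^2 - b^2) + ρ + 2*c*η*a*r - (1-c^2)*lam = 0 := by
    linear_combination hre
  have E2 : 2*c*b*(c*a + η*r) = 0 := by linear_combination him
  clear_value q a b r
  clear hq ha hb hr hrw h heq hre him hq2 hza hzb
  -- clear denominators in hz
  rw [habs, hzre, hzim] at hz
  have hz' : 4*(1-c^2)*(-lam)*lam + c^4 * (2*a*b)^2
      < 4*(1-c^2)*(-lam)*c^2*(a^2 - b^2 + lam) := by
    have hpos : (0:ℝ) < 4*(1-c^2)*(-lam)*c^2 := by positivity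
    have h2 := mul_lt_mul_of_pos_left hz hpos
    have hd : 4*(1-c^2)*(-lam) ≠ 0 := by positivity
    have e1 : lam / c^2 * c^2 = lam := div_mul_cancel₀ lam (ne_of_gt hc2)
    have e2 : c^2 / (4*(1-c^2)*(-lam)) * (4*(1-c^2)*(-lam)) = c^2 := div_mul_cancel₀ _ hd
    have hprod : (4*(1-c^2)*(-lam)*c^2) * (lam / c ^ 2 + c ^ 2 / (4 * (1 - c ^ 2) * -lam) * (2*a*b) ^ 2)
        = 4*(1-c^2)*(-lam)*lam + c^4 * (2*a*b)^2 := by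
      linear_combination (4*(1-c^2)*(-lam)) * e1 + (c^2 * (2*a*b)^2) * e2
    rw [hprod] at h2
    linarith [h2]
  -- case split from E2
  have hcase : b = 0 ∨ c*a + η*r = 0 := by
    rcases mul_eq_zero.mp E2 with h1 | h1
    · left
      rcases mul_eq_zero.mp h1 with h2 | h2
      · exfalso; apply hcne; rcases mul_eq_zero.mp h2 with h3 | h3
        · norm_num at h3
        · exact h3
      · exact h2
    · right; exact h1
  rcases hcase with hb0 | hcr
  · -- b = 0 : real equation already impossible
    rw [hb0] at E1
    nlinarith [sq_nonneg (c*a + η*r), mul_nonneg (mul_nonneg hrnneg hrnneg)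
      (sub_nonneg.mpr (by nlinarith : η^2 ≤ 1)), hr2, hs2, hL]
  · -- η r = - c a
    have hrho : ρ = c^2*(a^2 + b^2) + (1-c^2)*lam := by
      linear_combination E1 - 2*c*a*hcr
    have hbound : (1-c^2)*(-lam) ≤ c^2 * b^2 := by
      have hη' : η^2 ≤ 1 := by nlinarith
      have h1 : (η*r)^2 ≤ r^2 := by nlinarith [mul_nonneg (by linarith : (0:ℝ) ≤ 1 - η^2) (sq_nonneg r)]
      have h2 : (η*r)^2 = c^2*a^2 := by linear_combination (η*r - c*a)*hcr
      nlinarith [h1, h2, hr2, hrho]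
    have key : 4*(1-c^2)*(-lam)*c^2*(a^2-b^2+lam) - (4*(1-c^2)*(-lam)*lam + c^4*(2*a*b)^2)
        = 4*(((1-c^2)*(-lam) - c^2*b^2) * (c^2*a^2 + (1-c^2)*(-lam))) := by ring
    have hf1 : (1-c^2)*(-lam) - c^2*b^2 ≤ 0 := by linarith
    have hf2 : 0 ≤ c^2*a^2 + (1-c^2)*(-lam) := by positivity
    have h3 : ((1-c^2)*(-lam) - c^2*b^2) * (c^2*a^2 + (1-c^2)*(-lam)) ≤ 0 :=
      mul_nonpos_of_nonpos_of_nonneg hf1 hf2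
    linarith [hz', key, h3]
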